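/- arXiv:0804.1059 — 4 statements merged into one kernel-verified Lean document; each statement's English description precedes it below -/
import Mathlib

section
/- Let 𝒳 be a finite type, d ≥ 1, let P and Q be probability mass functions on 𝒳, and let (ρ^x)_{x∈𝒳} and (σ^x)_{x∈𝒳} be families of d×d density matrices. Then the trace distance between the two cq-states decomposes blockwise: δ(Σ_x P(x)·(E_{x,x}⊗ρ^x), Σ_x Q(x)·(E_{x,x}⊗σ^x)) = Σ_x δ(P(x)·ρ^x, Q(x)·σ^x). -/
open Matrix Kronecker
open scoped ComplexOrder

/-- Trace distance of two (Hermitian) matrices: half the sum of the absolute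
values of the eigenvalues of their difference. -/
noncomputable def traceDist {n : Type*} [Fintype n] [DecidableEq n]
    (A B : Matrix n n ℂ) : ℝ :=
  if h : (A - B).IsHermitian then (1 / 2) * ∑ i, |h.eigenvalues i| else 0

/-- A probability mass function on a finite type. -/
def IsPMF {𝒯 : Type*} [Fintype 𝒯] (P : 𝒯 → ℝ) : Prop :=
  (∀ t, 0 ≤ P t) ∧ ∑ t, P t = 1

/-- A density matrix: positive semidefinite (hence Hermitian) with trace 1. -/
def IsDensity {d : ℕ} (ρ : Matrix (Fin d) (Fin d) ℂ) : Prop :=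
  ρ.PosSemidef ∧ ρ.trace = 1

/-- The block-diagonal density matrix of a cq-state:  ρ = Σ_t P(t)·(E_{t,t} ⊗ ρ^t). -/
noncomputable def cqState {𝒯 : Type*} [Fintype 𝒯] [DecidableEq 𝒯] {d : ℕ}
    (P : 𝒯 → ℝ) (ρ : 𝒯 → Matrix (Fin d) (Fin d) ℂ) :
    Matrix (𝒯 × Fin d) (𝒯 × Fin d) ℂ :=
  ∑ t, (P t : ℂ) • (Matrix.single t t 1 ⊗ₖ ρ t)

/-! ### Auxiliary lemmas -/

section Aux

set_option linter.unusedSectionVars false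

lemma psd_diag_re' {n : Type*} [Fintype n] [DecidableEq n] {A : Matrix n n ℂ}
    (hA : A.PosSemidef) (i : n) : 0 ≤ (A i i).re ∧ (A i i).im = 0 := by
  have h := hA.dotProduct_mulVec_nonneg (Pi.single i 1)
  simp [dotProduct, mulVec, Pi.single_apply, Finset.sum_ite_eq, Finset.sum_ite_eq'] at h
  rw [Complex.le_def] at h
  simp at h
  exact ⟨h.1, h.2.symm⟩

lemma re_trace_mul_le' {n : Type*} [Fintype n] [DecidableEq n]
    {M S : Matrix n n ℂ} (hM : M.IsHermitian)
    (h1 : (1 - S).PosSemidef) (h2 : (1 + S).PosSemidef) :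
    (M * S).trace.re ≤ ∑ i, |hM.eigenvalues i| := by
  set U : Matrix n n ℂ := (hM.eigenvectorUnitary : Matrix n n ℂ) with hU
  have hUU : star U * U = 1 := Unitary.coe_star_mul_self _
  have hUU' : U * star U = 1 := Unitary.coe_mul_star_self _
  set T := star U * S * U with hT
  have h1T : (1 - T).PosSemidef := by
    have := h1.conjTranspose_mul_mul_same (B := U)
    rw [star_eq_conjTranspose] at hT
    rw [hT]
    convert this using 1
    simp only [← star_eq_conjTranspose, mul_sub, sub_mul, mul_one, hUU]
  have h2T : (1 + T).PosSemidef := by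
    have := h2.conjTranspose_mul_mul_same (B := U)
    rw [star_eq_conjTranspose] at hT
    rw [hT]
    convert this using 1
    simp only [← star_eq_conjTranspose, mul_add, add_mul, mul_one, hUU]
  have htr : (M * S).trace
      = (diagonal ((RCLike.ofReal ∘ hM.eigenvalues : n → ℂ)) * T).trace := by
    conv_lhs => rw [hM.spectral_theorem, Unitary.conjStarAlgAut_apply]
    rw [hT, ← hU]
    rw [mul_assoc, mul_assoc, trace_mul_comm U, mul_assoc, mul_assoc]
  have hTbd : ∀ i, |(T i i).re| ≤ 1 := by
    intro i
    have a1 := (psd_diag_re' h1T i).1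
    have a2 := (psd_diag_re' h2T i).1
    simp [one_apply] at a1 a2
    rw [abs_le]; constructor <;> linarith
  rw [htr]
  have : (diagonal ((RCLike.ofReal ∘ hM.eigenvalues : n → ℂ)) * T).trace
      = ∑ i, (hM.eigenvalues i : ℂ) * T i i := by
    simp [Matrix.trace, Matrix.diag, mul_apply, diagonal_apply, Finset.sum_ite_eq]
  rw [this, Complex.re_sum]
  apply Finset.sum_le_sum
  intro i _
  have : ((hM.eigenvalues i : ℂ) * T i i).re = hM.eigenvalues i * (T i i).re := by
    simp [Complex.mul_re]
  rw [this]
  calc hM.eigenvalues i * (T i i).re ≤ |hM.eigenvalues i * (T i i).re| := le_abs_self _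
    _ = |hM.eigenvalues i| * |(T i i).re| := abs_mul _ _
    _ ≤ |hM.eigenvalues i| * 1 := mul_le_mul_of_nonneg_left (hTbd i) (abs_nonneg _)
    _ = _ := mul_one _

lemma exists_sign_witness' {n : Type*} [Fintype n] [DecidableEq n]
    {M : Matrix n n ℂ} (hM : M.IsHermitian) :
    ∃ S : Matrix n n ℂ, (1 - S).PosSemidef ∧ (1 + S).PosSemidef ∧
      (M * S).trace.re = ∑ i, |hM.eigenvalues i| := by
  set U : Matrix n n ℂ := (hM.eigenvectorUnitary : Matrix n n ℂ) with hU
  have hUU : star U * U = 1 := Unitary.coe_star_mul_self _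
  have hUU' : U * star U = 1 := Unitary.coe_mul_star_self _
  have key : ∀ X : Matrix n n ℂ, star U * (U * X) = X := fun X => by
    rw [← mul_assoc, hUU, one_mul]
  set s : n → ℂ := fun i => if hM.eigenvalues i < 0 then (-1 : ℂ) else 1 with hs
  refine ⟨U * diagonal s * star U, ?_, ?_, ?_⟩
  · have h : (1 : Matrix n n ℂ) - U * diagonal s * star U
        = U * diagonal (fun i => 1 - s i) * star U := by
      have hd : diagonal (fun i => 1 - s i) = 1 - diagonal s := by
        rw [← diagonal_one, ← diagonal_sub]
      rw [hd, mul_sub, sub_mul, mul_one, hUU']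
    rw [h, star_eq_conjTranspose]
    refine (PosSemidef.diagonal ?_).mul_mul_conjTranspose_same U
    intro i
    by_cases hneg : hM.eigenvalues i < 0 <;> simp [hs, hneg]
    norm_num
  · have h : (1 : Matrix n n ℂ) + U * diagonal s * star U
        = U * diagonal (fun i => 1 + s i) * star U := by
      have hd : diagonal (fun i => 1 + s i) = 1 + diagonal s := by
        rw [← diagonal_one, ← diagonal_add]
      rw [hd, mul_add, add_mul, mul_one, hUU']
    rw [h, star_eq_conjTranspose]
    refine (PosSemidef.diagonal ?_).mul_mul_conjTranspose_same U
    intro i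
    by_cases hneg : hM.eigenvalues i < 0 <;> simp [hs, hneg]
    norm_num
  · have htr : M * (U * diagonal s * star U)
        = U * (diagonal (fun i => (hM.eigenvalues i : ℂ) * s i) * star U) := by
      conv_lhs => rw [hM.spectral_theorem, Unitary.conjStarAlgAut_apply, ← hU]
      simp only [mul_assoc, key]
      rw [← mul_assoc (diagonal _), diagonal_mul_diagonal]
      rfl
    rw [htr, trace_mul_comm, mul_assoc, hUU, mul_one, trace_diagonal]
    rw [Complex.re_sum]
    refine Finset.sum_congr rfl fun i _ => ?_
    by_cases hneg : hM.eigenvalues i < 0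
    · simp [hs, hneg, abs_of_neg hneg]
    · simp [hs, hneg, abs_of_nonneg (not_lt.mp hneg)]

variable {𝒳 n : Type*} [Fintype 𝒳] [DecidableEq 𝒳] [Fintype n] [DecidableEq n]

/-- Block-diagonal matrix built from a family of square matrices. -/
def bd (m : 𝒳 → Matrix n n ℂ) : Matrix (𝒳 × n) (𝒳 × n) ℂ :=
  fun p q => if p.1 = q.1 then m p.1 p.2 q.2 else 0

lemma bd_isHermitian {m : 𝒳 → Matrix n n ℂ} (hm : ∀ x, (m x).IsHermitian) :
    (bd m).IsHermitian := by
  ext ⟨x, i⟩ ⟨y, j⟩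
  simp only [conjTranspose_apply, bd]
  rcases eq_or_ne x y with h | h
  · subst h; simp [← (hm x).apply j i]
  · simp [h, Ne.symm h]

lemma bd_posSemidef {m : 𝒳 → Matrix n n ℂ} (hm : ∀ x, (m x).PosSemidef) :
    (bd m).PosSemidef := by
  refine PosSemidef.of_dotProduct_mulVec_nonneg (bd_isHermitian fun x => (hm x).1) fun v => ?_
  have : dotProduct (star v) (bd m *ᵥ v)
      = ∑ x, dotProduct (star fun i => v (x, i)) (m x *ᵥ fun i => v (x, i)) := by
    simp only [dotProduct, mulVec, Fintype.sum_prod_type, bd, Pi.star_apply]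
    refine Finset.sum_congr rfl fun x _ => Finset.sum_congr rfl fun i _ => ?_
    simp only [ite_mul, zero_mul, ← Finset.mul_sum]
    congr 1
    rw [Finset.sum_comm]
    simp
  rw [this]
  exact Finset.sum_nonneg fun x _ => (hm x).dotProduct_mulVec_nonneg _

lemma one_sub_bd (m : 𝒳 → Matrix n n ℂ) : 1 - bd m = bd (fun x => 1 - m x) := by
  ext ⟨x, i⟩ ⟨y, j⟩
  rcases eq_or_ne x y with h | h
  · subst h
    simp [bd, one_apply, Prod.ext_iff]
  · simp [bd, one_apply, Prod.ext_iff, h]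

lemma one_add_bd (m : 𝒳 → Matrix n n ℂ) : 1 + bd m = bd (fun x => 1 + m x) := by
  ext ⟨x, i⟩ ⟨y, j⟩
  rcases eq_or_ne x y with h | h
  · subst h
    simp [bd, one_apply, Prod.ext_iff]
  · simp [bd, one_apply, Prod.ext_iff, h]

lemma trace_bd_mul (m : 𝒳 → Matrix n n ℂ) (S : Matrix (𝒳 × n) (𝒳 × n) ℂ) :
    (bd m * S).trace = ∑ x, (m x * S.submatrix (Prod.mk x) (Prod.mk x)).trace := by
  simp only [Matrix.trace, Matrix.diag, mul_apply, Fintype.sum_prod_type, bd, submatrix_apply]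
  refine Finset.sum_congr rfl fun x _ => Finset.sum_congr rfl fun i _ => ?_
  rw [Finset.sum_comm]
  simp [Finset.sum_ite_eq, Finset.sum_ite_eq']

lemma sub_block_psd {S : Matrix (𝒳 × n) (𝒳 × n) ℂ} (h : (1 - S).PosSemidef) (x : 𝒳) :
    (1 - S.submatrix (Prod.mk x) (Prod.mk x)).PosSemidef := by
  have h2 := h.submatrix (Prod.mk x)
  convert h2 using 1
  ext p q
  simp [submatrix_apply, Matrix.sub_apply, one_apply, Prod.ext_iff]

lemma add_block_psd {S : Matrix (𝒳 × n) (𝒳 × n) ℂ} (h : (1 + S).PosSemidef) (x : 𝒳) :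
    (1 + S.submatrix (Prod.mk x) (Prod.mk x)).PosSemidef := by
  have h2 := h.submatrix (Prod.mk x)
  convert h2 using 1
  ext p q
  simp [submatrix_apply, Matrix.add_apply, one_apply, Prod.ext_iff]

lemma sum_abs_eigenvalues_bd {m : 𝒳 → Matrix n n ℂ} (hm : ∀ x, (m x).IsHermitian)
    (hM : (bd m).IsHermitian) :
    ∑ p, |hM.eigenvalues p| = ∑ x, ∑ i, |(hm x).eigenvalues i| := by
  apply le_antisymm
  · obtain ⟨S, h1, h2, hS⟩ := exists_sign_witness' hM
    rw [← hS, trace_bd_mul, Complex.re_sum]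
    exact Finset.sum_le_sum fun x _ =>
      re_trace_mul_le' (hm x) (sub_block_psd h1 x) (add_block_psd h2 x)
  · choose S h1 h2 hS using fun x => exists_sign_witness' (hm x)
    have hbd1 : (1 - bd S).PosSemidef := by
      rw [one_sub_bd]; exact bd_posSemidef h1
    have hbd2 : (1 + bd S).PosSemidef := by
      rw [one_add_bd]; exact bd_posSemidef h2
    have hle := re_trace_mul_le' hM hbd1 hbd2
    have hblk : ∀ x, (bd S).submatrix (Prod.mk x) (Prod.mk x) = S x := by
      intro x; ext i j; simp [bd, submatrix_apply]
    have htr : (bd m * bd S).trace = ∑ x, (m x * S x).trace := by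
      rw [trace_bd_mul]
      exact Finset.sum_congr rfl fun x _ => by rw [hblk x]
    rw [htr, Complex.re_sum] at hle
    calc ∑ x, ∑ i, |(hm x).eigenvalues i| = ∑ x, ((m x * S x).trace).re :=
          Finset.sum_congr rfl fun x _ => (hS x).symm
      _ ≤ ∑ p, |hM.eigenvalues p| := hle

end Aux

/-- The trace distance between two cq-states decomposes blockwise. -/
theorem stmt0 {𝒳 : Type*} [Fintype 𝒳] [DecidableEq 𝒳] {d : ℕ} (hd : 1 ≤ d)
    (P Q : 𝒳 → ℝ) (hP : IsPMF P) (hQ : IsPMF Q)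
    (ρ σ : 𝒳 → Matrix (Fin d) (Fin d) ℂ)
    (hρ : ∀ x, IsDensity (ρ x)) (hσ : ∀ x, IsDensity (σ x)) :
    traceDist (cqState P ρ) (cqState Q σ)
      = ∑ x, traceDist ((P x : ℂ) • ρ x) ((Q x : ℂ) • σ x) := by
  set f : 𝒳 → Matrix (Fin d) (Fin d) ℂ := fun x => (P x : ℂ) • ρ x - (Q x : ℂ) • σ x with hfdef
  have hsm : ∀ (r : ℝ) (A : Matrix (Fin d) (Fin d) ℂ), A.IsHermitian →
      ((r : ℂ) • A).IsHermitian := by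
    intro r A hA
    rw [Matrix.IsHermitian, conjTranspose_smul, hA.eq]
    congr 1
    simp [Complex.star_def, Complex.conj_ofReal]
  have hf : ∀ x, (f x).IsHermitian := fun x =>
    (hsm _ _ (hρ x).1.1).sub (hsm _ _ (hσ x).1.1)
  have hdiff : cqState P ρ - cqState Q σ = bd f := by
    ext ⟨x, i⟩ ⟨y, j⟩
    simp only [Matrix.sub_apply, cqState, Finset.sum_apply, Matrix.sum_apply, Matrix.smul_apply,
      kroneckerMap_apply, Matrix.single, of_apply, smul_eq_mul, bd, hfdef]
    rcases eq_or_ne x y with h | h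
    · subst h
      simp [ite_and, Finset.sum_ite_eq, mul_ite, ite_mul]
    · simp [ite_and, Prod.ext_iff, h, mul_ite, ite_mul]
  have hMbd : (bd f).IsHermitian := bd_isHermitian hf
  simp only [traceDist, hdiff]
  rw [dif_pos hMbd]
  have hrhs : ∀ x, (((P x : ℂ) • ρ x) - ((Q x : ℂ) • σ x)) = f x := fun x => rfl
  rw [sum_abs_eigenvalues_bd hf hMbd, Finset.mul_sum]
  refine Finset.sum_congr rfl fun x _ => ?_
  rw [dif_pos (hf x)]
end

section
/- Let 𝒳 be a finite type, d ≥ 1, let P and Q be probability mass functions on 𝒳, and let (ρ^x)_{x∈𝒳} and (σ^x)_{x∈𝒳} be families of d×d density matrices. Then the statistical distance of the classical marginals is bounded by the trace distance of the cq-states: (1/2)·Σ_x |P(x) − Q(x)| ≤ δ(Σ_x P(x)·(E_{x,x}⊗ρ^x), Σ_x Q(x)·(E_{x,x}⊗σ^x)). -/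
open Matrix Kronecker
open scoped ComplexOrder

private lemma re_mul_real_star (u : ℂ) (r : ℝ) : (u * (r:ℂ) * star u).re = r * Complex.normSq u := by
  have : u * (r:ℂ) * star u = ((r * Complex.normSq u : ℝ) : ℂ) := by
    rw [Complex.ofReal_mul, Complex.normSq_eq_conj_mul_self]
    simp only [RCLike.star_def]; ring
  rw [this, Complex.ofReal_re]

private lemma diag_spec {n : Type*} [Fintype n] [DecidableEq n] {A : Matrix n n ℂ}
    (hA : A.IsHermitian) (i : n) :
    (A i i).re = ∑ k, hA.eigenvalues k * Complex.normSq ((hA.eigenvectorUnitary : Matrix n n ℂ) i k) := by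
  conv_lhs => rw [hA.spectral_theorem, Unitary.conjStarAlgAut_apply]
  simp only [mul_apply, diagonal_apply, Function.comp, star_apply, mul_ite, mul_zero,
    Finset.sum_ite_eq', Finset.mem_univ, if_true, Complex.re_sum]
  exact Finset.sum_congr rfl fun k _ => re_mul_real_star _ _

private lemma col_norm {n : Type*} [Fintype n] [DecidableEq n] {A : Matrix n n ℂ}
    (hA : A.IsHermitian) (k : n) :
    ∑ i, Complex.normSq ((hA.eigenvectorUnitary : Matrix n n ℂ) i k) = 1 := by
  have h := (Matrix.mem_unitaryGroup_iff').mp hA.eigenvectorUnitary.2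
  have h2 := congrFun (congrFun h k) k
  simp only [mul_apply, star_apply, one_apply_eq] at h2
  have : ∀ i, star ((hA.eigenvectorUnitary : Matrix n n ℂ) i k) * (hA.eigenvectorUnitary : Matrix n n ℂ) i k
      = (Complex.normSq ((hA.eigenvectorUnitary : Matrix n n ℂ) i k) : ℂ) := fun i => by
    rw [Complex.normSq_eq_conj_mul_self]; rfl
  rw [Finset.sum_congr rfl (fun i _ => this i)] at h2
  exact_mod_cast h2

private lemma key {n : Type*} [Fintype n] [DecidableEq n] {A : Matrix n n ℂ} (hA : A.IsHermitian)
    (m : n → ℝ) (hm : ∀ k, |m k| ≤ 1) :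
    ∑ i, m i * (A i i).re ≤ ∑ k, |hA.eigenvalues k| := by
  calc ∑ i, m i * (A i i).re
      = ∑ k, hA.eigenvalues k * ∑ i, m i * Complex.normSq ((hA.eigenvectorUnitary : Matrix n n ℂ) i k) := by
        simp only [diag_spec hA, Finset.mul_sum]
        rw [Finset.sum_comm]
        congr 1; ext k; congr 1; ext i; ring
    _ ≤ ∑ k, |hA.eigenvalues k| := by
        apply Finset.sum_le_sum
        intro k _
        have hb : |∑ i, m i * Complex.normSq ((hA.eigenvectorUnitary : Matrix n n ℂ) i k)| ≤ 1 := by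
          calc |∑ i, m i * Complex.normSq ((hA.eigenvectorUnitary : Matrix n n ℂ) i k)|
              ≤ ∑ i, |m i * Complex.normSq ((hA.eigenvectorUnitary : Matrix n n ℂ) i k)| :=
                Finset.abs_sum_le_sum_abs _ _
            _ ≤ ∑ i, Complex.normSq ((hA.eigenvectorUnitary : Matrix n n ℂ) i k) := by
                apply Finset.sum_le_sum; intro i _
                rw [abs_mul, abs_of_nonneg (Complex.normSq_nonneg _)]
                exact mul_le_of_le_one_left (Complex.normSq_nonneg _) (hm i)
            _ = 1 := col_norm hA k
        calc hA.eigenvalues k * _ ≤ |hA.eigenvalues k * _| := le_abs_self _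
          _ = |hA.eigenvalues k| * |_| := abs_mul _ _
          _ ≤ |hA.eigenvalues k| * 1 := mul_le_mul_of_nonneg_left hb (abs_nonneg _)
          _ = _ := mul_one _

private lemma cqState_apply' {𝒯 : Type*} [Fintype 𝒯] [DecidableEq 𝒯] {d : ℕ}
    (P : 𝒯 → ℝ) (ρ : 𝒯 → Matrix (Fin d) (Fin d) ℂ) (x y : 𝒯) (j k : Fin d) :
    cqState P ρ (x, j) (y, k) = if x = y then (P x : ℂ) * ρ x j k else 0 := by
  simp only [cqState, Finset.sum_apply, Matrix.sum_apply, Matrix.smul_apply, kroneckerMap_apply,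
    Matrix.single, of_apply, smul_eq_mul]
  rw [Finset.sum_eq_single x]
  · by_cases h : x = y <;> simp [h]
  · intro t _ ht; simp [ht]
  · simp

private lemma cq_herm {𝒯 : Type*} [Fintype 𝒯] [DecidableEq 𝒯] {d : ℕ}
    (P Q : 𝒯 → ℝ) (ρ σ : 𝒯 → Matrix (Fin d) (Fin d) ℂ)
    (hρ : ∀ x, (ρ x).IsHermitian) (hσ : ∀ x, (σ x).IsHermitian) :
    (cqState P ρ - cqState Q σ).IsHermitian := by
  ext ⟨x, j⟩ ⟨y, k⟩
  simp only [conjTranspose_apply, Matrix.sub_apply, cqState_apply', star_sub]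
  by_cases h : x = y
  · subst h
    simp only [if_true, star_mul', RCLike.star_def, Complex.conj_ofReal]
    rw [← (hρ x).apply, ← (hσ x).apply]
    simp
  · simp [h, Ne.symm h]

/-- The statistical distance of the classical marginals is bounded by the
trace distance of the cq-states. -/
theorem stmt2 {𝒳 : Type*} [Fintype 𝒳] [DecidableEq 𝒳] {d : ℕ} (hd : 1 ≤ d)
    (P Q : 𝒳 → ℝ) (hP : IsPMF P) (hQ : IsPMF Q)
    (ρ σ : 𝒳 → Matrix (Fin d) (Fin d) ℂ)
    (hρ : ∀ x, IsDensity (ρ x)) (hσ : ∀ x, IsDensity (σ x)) :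
    (1 / 2) * ∑ x, |P x - Q x| ≤ traceDist (cqState P ρ) (cqState Q σ) := by
  have hH : (cqState P ρ - cqState Q σ).IsHermitian :=
    cq_herm P Q ρ σ (fun x => (hρ x).1.1) (fun x => (hσ x).1.1)
  rw [traceDist, dif_pos hH]
  have h2 : ∀ i : 𝒳 × Fin d,
      ((cqState P ρ - cqState Q σ) i i).re
      = P i.1 * (ρ i.1 i.2 i.2).re - Q i.1 * (σ i.1 i.2 i.2).re := by
    rintro ⟨x, j⟩
    simp [Matrix.sub_apply, cqState_apply', Complex.sub_re]
  set m : 𝒳 × Fin d → ℝ := fun p => if Q p.1 ≤ P p.1 then 1 else -1 with hm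
  have hmb : ∀ p, |m p| ≤ 1 := by intro p; by_cases h : Q p.1 ≤ P p.1 <;> simp [hm, h]
  have hkey := key hH m hmb
  have htr : ∀ (τ : Matrix (Fin d) (Fin d) ℂ), τ.trace = 1 → ∑ j, (τ j j).re = 1 := by
    intro τ hτ
    have := congrArg Complex.re hτ
    rw [Matrix.trace, Complex.re_sum] at this
    simpa [Matrix.diag] using this
  have hsum : ∑ i : 𝒳 × Fin d, m i * ((cqState P ρ - cqState Q σ) i i).re
      = ∑ x, |P x - Q x| := by
    rw [← Finset.univ_product_univ, Finset.sum_product]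
    apply Finset.sum_congr rfl
    intro x _
    have h3 : ∀ j : Fin d, m (x, j) * ((cqState P ρ - cqState Q σ) (x, j) (x, j)).re
        = m (x, j) * (P x * (ρ x j j).re - Q x * (σ x j j).re) := fun j => by rw [h2]
    simp only [h3]
    by_cases h : Q x ≤ P x
    · simp only [hm, h, if_true, one_mul]
      rw [Finset.sum_sub_distrib, ← Finset.mul_sum, ← Finset.mul_sum,
        htr _ (hρ x).2, htr _ (hσ x).2, mul_one, mul_one, abs_of_nonneg (by linarith)]
    · simp only [hm, h, if_false, neg_one_mul, neg_sub]
      rw [Finset.sum_sub_distrib, ← Finset.mul_sum, ← Finset.mul_sum,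
        htr _ (hρ x).2, htr _ (hσ x).2, mul_one, mul_one, abs_of_neg (by linarith)]
      ring
  rw [hsum] at hkey
  linarith
end

section
/- Let 𝒳, 𝒴, 𝒵 be finite types, d ≥ 1, P a probability mass function on 𝒳×𝒴×𝒵, (ρ^{x,y,z}) a family of d×d density matrices, and ε ≥ 0. If δ(ρ_{XYZE}, ρ_{X↔Y↔(ZE)}) ≤ ε, then δ(ρ_{XYZE}, ρ_{X↔(Y,Z)↔E}) ≤ 2ε. -/
open Matrix Kronecker
open scoped ComplexOrder

namespace TN
variable {n : Type*} [Fintype n] [DecidableEq n]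

noncomputable def tn (A : Matrix n n ℂ) : ℝ :=
  if h : A.IsHermitian then ∑ i, |h.eigenvalues i| else 0

lemma tn_eq {A : Matrix n n ℂ} (h : A.IsHermitian) : tn A = ∑ i, |h.eigenvalues i| := dif_pos h

lemma trace_eq {A : Matrix n n ℂ} (h : A.IsHermitian) :
    A.trace = ((∑ i, h.eigenvalues i : ℝ) : ℂ) := by
  conv_lhs => rw [h.spectral_theorem, Unitary.conjStarAlgAut_apply]
  rw [trace_mul_comm, ← Matrix.mul_assoc]
  rw [(Matrix.mem_unitaryGroup_iff').mp (h.eigenvectorUnitary).2, Matrix.one_mul,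
    trace_diagonal]
  push_cast
  rfl

lemma psd_diag_re {M : Matrix n n ℂ} (hM : M.PosSemidef) (i : n) : 0 ≤ (M i i).re := by
  have := hM.re_dotProduct_nonneg (Pi.single i 1)
  simpa [dotProduct, mulVec, Pi.single_apply, Finset.sum_ite_eq, Finset.sum_ite_eq'] using this

lemma re_trace_mul_le {W A : Matrix n n ℂ} (hA : A.IsHermitian)
    (h1 : (1 - W).PosSemidef) (h2 : (1 + W).PosSemidef) :
    ((W * A).trace).re ≤ tn A := by
  set U : Matrix n n ℂ := (hA.eigenvectorUnitary : Matrix n n ℂ)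
  have hUU : star U * U = 1 := Matrix.mem_unitaryGroup_iff'.mp (hA.eigenvectorUnitary).2
  set V : Matrix n n ℂ := star U * W * U with hV
  have key : (W * A).trace = (V * diagonal (RCLike.ofReal ∘ hA.eigenvalues)).trace := by
    conv_lhs => rw [hA.spectral_theorem, Unitary.conjStarAlgAut_apply]
    rw [show W * (U * diagonal (RCLike.ofReal ∘ hA.eigenvalues) * star U)
        = (W * U * diagonal (RCLike.ofReal ∘ hA.eigenvalues)) * star U by
      noncomm_ring]
    rw [trace_mul_comm, hV]
    noncomm_ring
  have hVi : ∀ i, |(V i i).re| ≤ 1 := by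
    intro i
    have p1 : (star U * (1 - W) * U).PosSemidef := h1.conjTranspose_mul_mul_same U
    have p2 : (star U * (1 + W) * U).PosSemidef := h2.conjTranspose_mul_mul_same U
    have e1 : star U * (1 - W) * U = 1 - V := by
      rw [Matrix.mul_sub, Matrix.sub_mul, Matrix.mul_one, hUU, hV]
    have e2 : star U * (1 + W) * U = 1 + V := by
      rw [Matrix.mul_add, Matrix.add_mul, Matrix.mul_one, hUU, hV]
    rw [e1] at p1; rw [e2] at p2
    have q1 := psd_diag_re p1 i
    have q2 := psd_diag_re p2 i
    simp [Matrix.sub_apply, Matrix.add_apply, Matrix.one_apply] at q1 q2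
    rw [abs_le]; constructor <;> linarith
  rw [key, tn_eq hA, Matrix.trace]
  simp only [Matrix.diag_apply, Matrix.mul_diagonal, Function.comp_apply]
  rw [Complex.re_sum]
  refine Finset.sum_le_sum fun i _ => ?_
  have : (V i i * (RCLike.ofReal (hA.eigenvalues i) : ℂ)).re = (V i i).re * hA.eigenvalues i := by
    simp [Complex.mul_re, RCLike.ofReal, Complex.ofReal]
  rw [this]
  calc (V i i).re * hA.eigenvalues i ≤ |(V i i).re * hA.eigenvalues i| := le_abs_self _
    _ = |(V i i).re| * |hA.eigenvalues i| := abs_mul _ _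
    _ ≤ 1 * |hA.eigenvalues i| :=
        mul_le_mul_of_nonneg_right (hVi i) (abs_nonneg _)
    _ = |hA.eigenvalues i| := one_mul _

lemma exists_dual {A : Matrix n n ℂ} (hA : A.IsHermitian) :
    ∃ W : Matrix n n ℂ, (1 - W).PosSemidef ∧ (1 + W).PosSemidef ∧
      ((W * A).trace).re = tn A := by
  set U : Matrix n n ℂ := (hA.eigenvectorUnitary : Matrix n n ℂ)
  have hUU : star U * U = 1 := Matrix.mem_unitaryGroup_iff'.mp (hA.eigenvectorUnitary).2
  have hUU' : U * star U = 1 := Matrix.mem_unitaryGroup_iff.mp (hA.eigenvectorUnitary).2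
  set s : n → ℝ := fun i => if hA.eigenvalues i < 0 then -1 else 1 with hs
  refine ⟨U * diagonal (fun i => (s i : ℂ)) * star U, ?_, ?_, ?_⟩
  · have e : 1 - U * diagonal (fun i => (s i : ℂ)) * star U
        = U * diagonal (fun i => (1 : ℂ) - (s i : ℂ)) * star U := by
      rw [show (diagonal (fun i => (1 : ℂ) - (s i : ℂ)))
          = 1 - diagonal (fun i => (s i : ℂ)) by
        rw [← Matrix.diagonal_one, Matrix.diagonal_sub]]
      rw [Matrix.mul_sub, Matrix.sub_mul, Matrix.mul_one, hUU']
    rw [e]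
    refine PosSemidef.mul_mul_conjTranspose_same ?_ U
    refine Matrix.posSemidef_diagonal_iff.mpr fun i => ?_
    rw [hs]
    by_cases hneg : hA.eigenvalues i < 0 <;> simp [hneg] <;> norm_num
  · have e : 1 + U * diagonal (fun i => (s i : ℂ)) * star U
        = U * diagonal (fun i => (1 : ℂ) + (s i : ℂ)) * star U := by
      rw [show (diagonal (fun i => (1 : ℂ) + (s i : ℂ)))
          = 1 + diagonal (fun i => (s i : ℂ)) by
        rw [← Matrix.diagonal_one, Matrix.diagonal_add]]
      rw [Matrix.mul_add, Matrix.add_mul, Matrix.mul_one, hUU']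
    rw [e]
    refine PosSemidef.mul_mul_conjTranspose_same ?_ U
    refine Matrix.posSemidef_diagonal_iff.mpr fun i => ?_
    rw [hs]
    by_cases hneg : hA.eigenvalues i < 0 <;> simp [hneg] <;> norm_num
  · have key : U * diagonal (fun i => (s i : ℂ)) * star U * A
        = U * diagonal (fun i => ((s i * hA.eigenvalues i : ℝ) : ℂ)) * star U := by
      conv_lhs => rw [hA.spectral_theorem, Unitary.conjStarAlgAut_apply]
      rw [show U * diagonal (fun i => (s i : ℂ)) * star U *
          (U * diagonal (RCLike.ofReal ∘ hA.eigenvalues) * star U)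
          = U * (diagonal (fun i => (s i : ℂ)) * (star U * U) *
            diagonal (RCLike.ofReal ∘ hA.eigenvalues)) * star U by noncomm_ring]
      rw [hUU, Matrix.mul_one, Matrix.diagonal_mul_diagonal]
      congr 2
      ext i
      push_cast
      rfl
    rw [key, trace_mul_comm, ← Matrix.mul_assoc, hUU, Matrix.one_mul, trace_diagonal,
      tn_eq hA]
    have : ∀ i, s i * hA.eigenvalues i = |hA.eigenvalues i| := by
      intro i
      rw [hs]
      by_cases hneg : hA.eigenvalues i < 0
      · simp [hneg, abs_of_neg hneg]
      · simp [hneg, abs_of_nonneg (not_lt.mp hneg)]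
    simp only [this]
    rw [show (∑ i, ((|hA.eigenvalues i| : ℝ) : ℂ)) = ((∑ i, |hA.eigenvalues i| : ℝ) : ℂ) by
      push_cast; rfl]
    simp

lemma tn_add_le {A B : Matrix n n ℂ} (hA : A.IsHermitian) (hB : B.IsHermitian) :
    tn (A + B) ≤ tn A + tn B := by
  obtain ⟨W, h1, h2, hW⟩ := exists_dual (hA.add hB)
  rw [← hW, Matrix.mul_add, trace_add, Complex.add_re]
  exact add_le_add (re_trace_mul_le hA h1 h2) (re_trace_mul_le hB h1 h2)

lemma tn_smul_le (c : ℝ) {A : Matrix n n ℂ} (hA : A.IsHermitian) :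
    tn ((c : ℂ) • A) ≤ |c| * tn A := by
  have hcA : ((c : ℂ) • A).IsHermitian := by
    unfold Matrix.IsHermitian
    rw [Matrix.conjTranspose_smul, hA.eq, Complex.star_def, Complex.conj_ofReal]
  obtain ⟨W, h1, h2, hW⟩ := exists_dual hcA
  rw [← hW, Matrix.mul_smul, trace_smul]
  have h3 : (1 - (-W)).PosSemidef := by rw [sub_neg_eq_add]; exact h2
  have h4 : (1 + (-W)).PosSemidef := by rw [← sub_eq_add_neg]; exact h1
  have hle : ((W * A).trace).re ≤ tn A := re_trace_mul_le hA h1 h2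
  have hge : -(((W * A).trace).re) ≤ tn A := by
    have := re_trace_mul_le hA h3 h4
    rwa [Matrix.neg_mul, trace_neg, Complex.neg_re] at this
  have : ((c : ℂ) • (W * A).trace).re = c * ((W * A).trace).re := by
    simp [smul_eq_mul, Complex.mul_re]
  rw [this]
  rcases le_or_gt 0 c with hc | hc
  · rw [abs_of_nonneg hc]
    exact mul_le_mul_of_nonneg_left hle hc
  · rw [abs_of_neg hc]
    nlinarith
 
lemma tn_zero : tn (0 : Matrix n n ℂ) = 0 := by
  obtain ⟨W, _, _, hW⟩ := exists_dual (Matrix.isHermitian_zero (n := n) (α := ℂ))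
  rw [← hW]
  simp

lemma tn_psd {A : Matrix n n ℂ} (hA : A.PosSemidef) : tn A = (A.trace).re := by
  rw [tn_eq hA.isHermitian, trace_eq hA.isHermitian]
  simp only [Complex.ofReal_re]
  exact Finset.sum_congr rfl fun i _ => abs_of_nonneg (hA.eigenvalues_nonneg i)

lemma isHermitian_sum {ι : Type*} (s : Finset ι) (f : ι → Matrix n n ℂ)
    (hf : ∀ i, (f i).IsHermitian) : (∑ i ∈ s, f i).IsHermitian := by
  unfold Matrix.IsHermitian
  rw [Matrix.conjTranspose_sum]
  exact Finset.sum_congr rfl fun i _ => (hf i).eq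

lemma tn_sum_le {ι : Type*} (s : Finset ι) (f : ι → Matrix n n ℂ)
    (hf : ∀ i, (f i).IsHermitian) :
    tn (∑ i ∈ s, f i) ≤ ∑ i ∈ s, tn (f i) := by
  classical
  induction s using Finset.induction_on with
  | empty => simp [tn_zero]
  | insert _ _ hi ih =>
    rename_i a t
    rw [Finset.sum_insert hi, Finset.sum_insert hi]
    calc tn (f a + ∑ i ∈ t, f i) ≤ tn (f a) + tn (∑ i ∈ t, f i) :=
          tn_add_le (hf a) (isHermitian_sum _ _ hf)
      _ ≤ tn (f a) + ∑ i ∈ t, tn (f i) := by linarith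

lemma kron_conjTranspose {m : Type*} [Fintype m] [DecidableEq m]
    (A : Matrix n n ℂ) (B : Matrix m m ℂ) : (A ⊗ₖ B)ᴴ = Aᴴ ⊗ₖ Bᴴ := by
  ext ⟨i, j⟩ ⟨k, l⟩
  simp [Matrix.conjTranspose_apply, Matrix.kroneckerMap_apply]

lemma std_eq_diag (t : n) : Matrix.single t t (1 : ℂ)
    = diagonal (fun s => if s = t then 1 else 0) := by
  ext i j
  rw [Matrix.single, Matrix.diagonal_apply, Matrix.of_apply]
  by_cases h1 : i = j <;> by_cases h2 : t = i <;> aesop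

lemma psd_kron {m : Type*} [Fintype m] [DecidableEq m]
    {A : Matrix n n ℂ} {B : Matrix m m ℂ} (hA : A.PosSemidef) (hB : B.PosSemidef) :
    (A ⊗ₖ B).PosSemidef := by
  exact Matrix.PosSemidef.kronecker hA hB

lemma psd_smul {A : Matrix n n ℂ} (hA : A.PosSemidef) {c : ℝ} (hc : 0 ≤ c) :
    ((c : ℂ) • A).PosSemidef := by
  constructor
  · unfold Matrix.IsHermitian
    rw [Matrix.conjTranspose_smul, hA.1.eq, Complex.star_def, Complex.conj_ofReal]
  · intro x
    have := hA.2 x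
    exact (hA.smul (a := (c : ℂ)) (Complex.zero_le_real.mpr hc)).2 x

lemma psd_sum {ι : Type*} (s : Finset ι) (f : ι → Matrix n n ℂ)
    (hf : ∀ i, (f i).PosSemidef) : (∑ i ∈ s, f i).PosSemidef := by
  classical
  induction s using Finset.induction_on with
  | empty => simpa using Matrix.PosSemidef.zero
  | insert _ _ hi ih =>
    rename_i a t
    rw [Finset.sum_insert hi]
    exact (hf a).add ih


end TN

namespace TN
variable {n : Type*} [Fintype n] [DecidableEq n]

lemma herm_real_smul {A : Matrix n n ℂ} (hA : A.IsHermitian) (c : ℝ) :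
    ((c : ℂ) • A).IsHermitian := by
  unfold Matrix.IsHermitian
  rw [Matrix.conjTranspose_smul, hA.eq, Complex.star_def, Complex.conj_ofReal]

lemma traceDist_eq {A B : Matrix n n ℂ} (h : (A - B).IsHermitian) :
    traceDist A B = (1 / 2) * tn (A - B) := by
  rw [traceDist, dif_pos h, tn_eq h]

end TN

/-- If ρ_{XYZE} is ε-close to the Markov state ρ_{X↔Y↔(ZE)}, then it is
2ε-close to the Markov state ρ_{X↔(Y,Z)↔E}. -/
theorem stmt3 {𝒳 𝒴 𝒵 : Type*} [Fintype 𝒳] [DecidableEq 𝒳]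
    [Fintype 𝒴] [DecidableEq 𝒴] [Fintype 𝒵] [DecidableEq 𝒵] {d : ℕ} (hd : 1 ≤ d)
    (P : 𝒳 × 𝒴 × 𝒵 → ℝ) (hP : IsPMF P)
    (ρ : 𝒳 × 𝒴 × 𝒵 → Matrix (Fin d) (Fin d) ℂ) (hρ : ∀ t, IsDensity (ρ t))
    (ε : ℝ) (hε : 0 ≤ ε)
    (PY : 𝒴 → ℝ) (hPY : ∀ y, PY y = ∑ x, ∑ z, P (x, y, z))
    (PXY : 𝒳 × 𝒴 → ℝ) (hPXY : ∀ x y, PXY (x, y) = ∑ z, P (x, y, z))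
    (PYZ : 𝒴 × 𝒵 → ℝ) (hPYZ : ∀ y z, PYZ (y, z) = ∑ x, P (x, y, z))
    (ρE : 𝒴 × 𝒵 → Matrix (Fin d) (Fin d) ℂ)
    (hρE : ∀ y z, ρE (y, z) =
      if 0 < PYZ (y, z)
      then ((PYZ (y, z) : ℂ))⁻¹ • ∑ x, (P (x, y, z) : ℂ) • ρ (x, y, z)
      else 0)
    (h : traceDist (cqState P ρ)
        (cqState
          (fun t => if PY t.2.1 = 0 then 0 else PXY (t.1, t.2.1) * PYZ t.2 / PY t.2.1)
          (fun t => ρE t.2)) ≤ ε) :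
    traceDist (cqState P ρ) (cqState P (fun t => ρE t.2)) ≤ 2 * ε := by
  classical
  have hPnn := hP.1
  set Q : 𝒳 × 𝒴 × 𝒵 → ℝ :=
    fun t => if PY t.2.1 = 0 then 0 else PXY (t.1, t.2.1) * PYZ t.2 / PY t.2.1 with hQdef
  -- basic positivity facts
  have hPYZnn : ∀ yz : 𝒴 × 𝒵, 0 ≤ PYZ yz := by
    rintro ⟨y, z⟩; rw [hPYZ]; exact Finset.sum_nonneg fun _ _ => hPnn _
  have hPzero : ∀ t : 𝒳 × 𝒴 × 𝒵, ¬ 0 < PYZ t.2 → P t = 0 := by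
    rintro ⟨x, y, z⟩ hn
    have h0 : PYZ (y, z) = 0 := le_antisymm (not_lt.mp hn) (hPYZnn _)
    rw [hPYZ] at h0
    exact (Finset.sum_eq_zero_iff_of_nonneg (fun _ _ => hPnn _)).mp h0 x (Finset.mem_univ x)
  have hQzero : ∀ t : 𝒳 × 𝒴 × 𝒵, ¬ 0 < PYZ t.2 → Q t = 0 := by
    rintro ⟨x, y, z⟩ hn
    have h0 : PYZ (y, z) = 0 := le_antisymm (not_lt.mp hn) (hPYZnn _)
    by_cases hy : PY y = 0 <;> simp [hQdef, hy, h0]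
  -- ρE facts
  have hρEpsd : ∀ yz : 𝒴 × 𝒵, (ρE yz).PosSemidef := by
    rintro ⟨y, z⟩
    rw [hρE]
    split_ifs with hpos
    · rw [show ((PYZ (y, z) : ℂ))⁻¹ = (((PYZ (y, z))⁻¹ : ℝ) : ℂ) by push_cast; ring]
      exact TN.psd_smul
        (TN.psd_sum _ _ fun x => TN.psd_smul (hρ (x, y, z)).1 (hPnn _))
        (inv_nonneg.mpr (hPYZnn (y, z)))
    · exact Matrix.PosSemidef.zero
  have hρEtr : ∀ yz : 𝒴 × 𝒵, (ρE yz).trace = if 0 < PYZ yz then 1 else 0 := by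
    rintro ⟨y, z⟩
    rw [hρE]
    split_ifs with hpos
    · rw [Matrix.trace_smul, Matrix.trace_sum]
      have : ∀ x, ((P (x, y, z) : ℂ) • ρ (x, y, z)).trace = (P (x, y, z) : ℂ) := by
        intro x; rw [Matrix.trace_smul, (hρ (x, y, z)).2, smul_eq_mul, mul_one]
      rw [Finset.sum_congr rfl fun x _ => this x]
      rw [show (∑ x, ((P (x, y, z) : ℝ) : ℂ)) = ((∑ x, P (x, y, z) : ℝ) : ℂ) by push_cast; rfl]
      rw [← hPYZ, smul_eq_mul, inv_mul_cancel₀]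
      exact_mod_cast (ne_of_gt hpos)
    · simp
  -- stdBasisMatrix facts
  have hstdpsd : ∀ t : 𝒳 × 𝒴 × 𝒵, (Matrix.single t t (1 : ℂ)).PosSemidef := by
    intro t
    rw [TN.std_eq_diag]
    refine Matrix.posSemidef_diagonal_iff.mpr fun i => ?_
    split_ifs <;> simp
  have hstdtr : ∀ t : 𝒳 × 𝒴 × 𝒵, (Matrix.single t t (1 : ℂ)).trace = 1 := by
    intro t
    rw [TN.std_eq_diag, Matrix.trace_diagonal]
    simp
  -- hermitian of cq-states
  have hherm : ∀ (R : 𝒳 × 𝒴 × 𝒵 → ℝ) (σ : 𝒳 × 𝒴 × 𝒵 → Matrix (Fin d) (Fin d) ℂ),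
      (∀ t, (σ t).IsHermitian) → (cqState R σ).IsHermitian := by
    intro R σ hσ
    refine TN.isHermitian_sum _ _ fun t => ?_
    refine TN.herm_real_smul ?_ (R t)
    unfold Matrix.IsHermitian
    rw [TN.kron_conjTranspose, (hstdpsd t).isHermitian.eq, (hσ t).eq]
  have hAH : (cqState P ρ).IsHermitian := hherm P ρ fun t => (hρ t).1.isHermitian
  have hBH : (cqState Q (fun t => ρE t.2)).IsHermitian :=
    hherm Q _ fun t => (hρEpsd t.2).isHermitian
  have hB'H : (cqState P (fun t => ρE t.2)).IsHermitian :=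
    hherm P _ fun t => (hρEpsd t.2).isHermitian
  have hD1H : (cqState P ρ - cqState Q (fun t => ρE t.2)).IsHermitian := hAH.sub hBH
  have hD2H : (cqState P ρ - cqState P (fun t => ρE t.2)).IsHermitian := hAH.sub hB'H
  have hCH : (cqState Q (fun t => ρE t.2) - cqState P (fun t => ρE t.2)).IsHermitian :=
    hBH.sub hB'H
  -- hypothesis in tn form
  rw [TN.traceDist_eq hD1H] at h
  rw [TN.traceDist_eq hD2H]
  -- step 2 : bound tn C
  have hCeq : cqState Q (fun t => ρE t.2) - cqState P (fun t => ρE t.2)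
      = ∑ t, (((Q t - P t : ℝ)) : ℂ) • (Matrix.single t t 1 ⊗ₖ ρE t.2) := by
    rw [cqState, cqState, ← Finset.sum_sub_distrib]
    refine Finset.sum_congr rfl fun t _ => ?_
    rw [← sub_smul]
    push_cast
    ring_nf
  have htnX : ∀ t : 𝒳 × 𝒴 × 𝒵, TN.tn (Matrix.single t t 1 ⊗ₖ ρE t.2) ≤ 1 := by
    intro t
    rw [TN.tn_psd (TN.psd_kron (hstdpsd t) (hρEpsd t.2)), Matrix.trace_kronecker,
      hstdtr, one_mul, hρEtr]
    split_ifs <;> simp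
  have htnC : TN.tn (cqState Q (fun t => ρE t.2) - cqState P (fun t => ρE t.2))
      ≤ ∑ t, |Q t - P t| := by
    rw [hCeq]
    calc TN.tn (∑ t, (((Q t - P t : ℝ)) : ℂ) • (Matrix.single t t 1 ⊗ₖ ρE t.2))
        ≤ ∑ t, TN.tn ((((Q t - P t : ℝ)) : ℂ) • (Matrix.single t t 1 ⊗ₖ ρE t.2)) :=
          TN.tn_sum_le _ _ fun t => TN.herm_real_smul
            (TN.psd_kron (hstdpsd t) (hρEpsd t.2)).isHermitian _
      _ ≤ ∑ t, |Q t - P t| := by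
          refine Finset.sum_le_sum fun t _ => ?_
          calc TN.tn ((((Q t - P t : ℝ)) : ℂ) • (Matrix.single t t 1 ⊗ₖ ρE t.2))
              ≤ |Q t - P t| * TN.tn (Matrix.single t t 1 ⊗ₖ ρE t.2) :=
                TN.tn_smul_le _ (TN.psd_kron (hstdpsd t) (hρEpsd t.2)).isHermitian
            _ ≤ |Q t - P t| * 1 :=
                mul_le_mul_of_nonneg_left (htnX t) (abs_nonneg _)
            _ = |Q t - P t| := mul_one _
  -- step 3 : classical distance bounded by tn D1
  have hentry : ∀ (R : 𝒳 × 𝒴 × 𝒵 → ℝ) (σ : 𝒳 × 𝒴 × 𝒵 → Matrix (Fin d) (Fin d) ℂ)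
      (t : 𝒳 × 𝒴 × 𝒵) (i : Fin d),
      (cqState R σ) (t, i) (t, i) = (R t : ℂ) * σ t i i := by
    intro R σ t i
    rw [cqState, Matrix.sum_apply]
    rw [Finset.sum_eq_single t]
    · simp [TN.std_eq_diag, Matrix.kroneckerMap_apply, Matrix.diagonal_apply_eq]
    · intro b _ hbt
      simp [TN.std_eq_diag, Matrix.kroneckerMap_apply, Matrix.diagonal_apply_eq,
        Ne.symm hbt]
    · intro hmem
      exact absurd (Finset.mem_univ t) hmem
  have hclass : ∑ t, |P t - Q t|
      ≤ TN.tn (cqState P ρ - cqState Q (fun t => ρE t.2)) := by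
    set s : 𝒳 × 𝒴 × 𝒵 → ℝ := fun t => if P t - Q t < 0 then -1 else 1 with hsdef
    set W : Matrix ((𝒳 × 𝒴 × 𝒵) × Fin d) ((𝒳 × 𝒴 × 𝒵) × Fin d) ℂ :=
      Matrix.diagonal (fun p => (s p.1 : ℂ)) with hWdef
    have hWsub : 1 - W = Matrix.diagonal (fun p => (1 : ℂ) - (s p.1 : ℂ)) := by
      rw [hWdef, ← Matrix.diagonal_one, Matrix.diagonal_sub]
    have hWadd : 1 + W = Matrix.diagonal (fun p => (1 : ℂ) + (s p.1 : ℂ)) := by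
      rw [hWdef, ← Matrix.diagonal_one, Matrix.diagonal_add]
    have h1 : (1 - W).PosSemidef := by
      rw [hWsub]
      refine Matrix.posSemidef_diagonal_iff.mpr fun p => ?_
      rw [hsdef]
      by_cases hng : P p.1 - Q p.1 < 0 <;> simp [hng] <;> norm_num
    have h2 : (1 + W).PosSemidef := by
      rw [hWadd]
      refine Matrix.posSemidef_diagonal_iff.mpr fun p => ?_
      rw [hsdef]
      by_cases hng : P p.1 - Q p.1 < 0 <;> simp [hng] <;> norm_num
    have htr : (W * (cqState P ρ - cqState Q (fun t => ρE t.2))).trace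
        = ((∑ t, |P t - Q t| : ℝ) : ℂ) := by
      have hdiag : ∀ p : (𝒳 × 𝒴 × 𝒵) × Fin d,
          (W * (cqState P ρ - cqState Q (fun t => ρE t.2))) p p
          = (s p.1 : ℂ) * ((P p.1 : ℂ) * ρ p.1 p.2 p.2
              - (Q p.1 : ℂ) * ρE p.1.2 p.2 p.2) := by
        rintro ⟨t, i⟩
        rw [hWdef, Matrix.diagonal_mul, Matrix.sub_apply, hentry P ρ t i,
          hentry Q (fun t => ρE t.2) t i]
      rw [Matrix.trace]
      simp only [Matrix.diag_apply, hdiag]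
      rw [Fintype.sum_prod_type]
      have hinner : ∀ t : 𝒳 × 𝒴 × 𝒵,
          (∑ i : Fin d, (s t : ℂ) * ((P t : ℂ) * ρ t i i - (Q t : ℂ) * ρE t.2 i i))
          = ((|P t - Q t| : ℝ) : ℂ) := by
        intro t
        have habs : s t * (P t - Q t) = |P t - Q t| := by
          rw [hsdef]
          by_cases hng : P t - Q t < 0
          · simp [hng, abs_of_neg hng]
          · simp [hng, abs_of_nonneg (not_lt.mp hng)]
        rw [← Finset.mul_sum, Finset.sum_sub_distrib, ← Finset.mul_sum, ← Finset.mul_sum]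
        have e1 : (∑ i : Fin d, ρ t i i) = (ρ t).trace := rfl
        have e2 : (∑ i : Fin d, ρE t.2 i i) = (ρE t.2).trace := rfl
        rw [e1, e2, (hρ t).2, hρEtr]
        by_cases hpos : 0 < PYZ t.2
        · rw [if_pos hpos, mul_one, mul_one, ← habs]
          push_cast
          ring
        · rw [if_neg hpos, hPzero t hpos, hQzero t hpos]
          simp
      rw [Finset.sum_congr rfl fun t _ => hinner t]
      push_cast
      rfl
    have hle := TN.re_trace_mul_le hD1H h1 h2
    rw [htr] at hle
    simpa using hle
  -- assemble
  have key : TN.tn (cqState P ρ - cqState P (fun t => ρE t.2))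
      ≤ 2 * TN.tn (cqState P ρ - cqState Q (fun t => ρE t.2)) := by
    have hsplit : cqState P ρ - cqState P (fun t => ρE t.2)
        = (cqState P ρ - cqState Q (fun t => ρE t.2))
          + (cqState Q (fun t => ρE t.2) - cqState P (fun t => ρE t.2)) := by abel
    calc TN.tn (cqState P ρ - cqState P (fun t => ρE t.2))
        ≤ TN.tn (cqState P ρ - cqState Q (fun t => ρE t.2))
          + TN.tn (cqState Q (fun t => ρE t.2) - cqState P (fun t => ρE t.2)) := by
          rw [hsplit]; exact TN.tn_add_le hD1H hCH
      _ ≤ TN.tn (cqState P ρ - cqState Q (fun t => ρE t.2)) + ∑ t, |Q t - P t| := by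
          linarith
      _ ≤ 2 * TN.tn (cqState P ρ - cqState Q (fun t => ρE t.2)) := by
          have : (∑ t, |Q t - P t|) = ∑ t, |P t - Q t| :=
            Finset.sum_congr rfl fun t _ => abs_sub_comm _ _
          rw [this]
          linarith
  linarith
end

section
/- Let 𝒳, 𝒵 be finite types with 𝒳 nonempty, d ≥ 1, P a probability mass function on 𝒳×𝒵, (ρ^{x,z}) a family of d×d density matrices, and ε ≥ 0. If δ(ρ_{XZE}, (I/|𝒳|) ⊗ ρ_{ZE}) ≤ ε, where (I/|𝒳|) ⊗ ρ_{ZE} := Σ_{x,z} (1/|𝒳|)·P_Z(z)·(E_{(x,z),(x,z)} ⊗ τ^z), then δ(ρ_{XZE}, ρ_{X↔Z↔E}) ≤ 4ε. -/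
open Matrix Kronecker
open scoped ComplexOrder

namespace Stmt5Aux

variable {n : Type*} [Fintype n] [DecidableEq n]

noncomputable def tn (M : Matrix n n ℂ) : ℝ :=
  if h : M.IsHermitian then ∑ i, |h.eigenvalues i| else 0

lemma tn_herm {M : Matrix n n ℂ} (h : M.IsHermitian) :
    tn M = ∑ i, |h.eigenvalues i| := dif_pos h

lemma tn_nonneg (M : Matrix n n ℂ) : 0 ≤ tn M := by
  unfold tn; split
  · exact Finset.sum_nonneg fun i _ => abs_nonneg _
  · exact le_refl 0

lemma traceDist_eq (A B : Matrix n n ℂ) : traceDist A B = (1/2) * tn (A - B) := by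
  unfold traceDist tn
  split <;> simp

lemma col_norm {B : Matrix n n ℂ} (hB : Bᴴ * B = 1) (i : n) :
    ∑ k, Complex.normSq (B k i) = 1 := by
  have h := congrArg (fun M : Matrix n n ℂ => M i i) hB
  simp only [Matrix.mul_apply, Matrix.conjTranspose_apply, Matrix.one_apply_eq] at h
  have h2 : (↑(∑ k, Complex.normSq (B k i)) : ℂ) = 1 := by
    push_cast
    rw [← h]
    refine Finset.sum_congr rfl fun k _ => ?_
    rw [Complex.star_def]
    exact Complex.normSq_eq_conj_mul_self
  exact_mod_cast h2

lemma trace_formula {M : Matrix n n ℂ} (hM : M.IsHermitian) (V : Matrix n n ℂ) (s : n → ℝ) :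
    ((M * (V * Matrix.diagonal (fun k => (s k : ℂ)) * Vᴴ)).trace).re
      = ∑ i, ∑ k, hM.eigenvalues i * s k *
          Complex.normSq ((Vᴴ * (hM.eigenvectorUnitary : Matrix n n ℂ)) k i) := by
  set U : Matrix n n ℂ := (hM.eigenvectorUnitary : Matrix n n ℂ) with hUdef
  set B : Matrix n n ℂ := Vᴴ * U with hBdef
  set Dl : Matrix n n ℂ := Matrix.diagonal (fun i => (hM.eigenvalues i : ℂ)) with hDl
  set Ds : Matrix n n ℂ := Matrix.diagonal (fun k => (s k : ℂ)) with hDs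
  have hUl : Uᴴ * U = 1 := by
    simpa [Matrix.star_eq_conjTranspose] using Unitary.coe_star_mul_self hM.eigenvectorUnitary
  have hUr : U * Uᴴ = 1 := by
    simpa [Matrix.star_eq_conjTranspose] using Unitary.coe_mul_star_self hM.eigenvectorUnitary
  have hspec : M = U * Dl * Uᴴ := by
    have := hM.spectral_theorem
    simpa [Matrix.star_eq_conjTranspose, Function.comp_def, hDl] using this
  have h1 : (M * (V * Ds * Vᴴ)).trace = (Dl * (Bᴴ * (Ds * B))).trace := by
    rw [hspec]
    have e : U * Dl * Uᴴ * (V * Ds * Vᴴ) = U * ((Dl * (Bᴴ * (Ds * B))) * Uᴴ) := by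
      have hBH : Bᴴ = Uᴴ * V := by
        rw [hBdef, Matrix.conjTranspose_mul, Matrix.conjTranspose_conjTranspose]
      rw [hBH, hBdef]
      simp only [Matrix.mul_assoc]
      rw [hUr, Matrix.mul_one]
    rw [e, Matrix.trace_mul_comm, Matrix.mul_assoc, hUl, Matrix.mul_one]
  have h3 : ∀ i, (Bᴴ * (Ds * B)) i i = ∑ k, ((s k * Complex.normSq (B k i) : ℝ) : ℂ) := by
    intro i
    rw [Matrix.mul_apply]
    refine Finset.sum_congr rfl fun k _ => ?_
    rw [hDs, Matrix.diagonal_mul, Matrix.conjTranspose_apply, Complex.star_def]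
    rw [show (starRingEnd ℂ) (B k i) * ((s k : ℂ) * B k i)
        = (s k : ℂ) * ((starRingEnd ℂ) (B k i) * B k i) from by ring]
    rw [← Complex.normSq_eq_conj_mul_self]
    push_cast
    ring
  have h2 : (Dl * (Bᴴ * (Ds * B))).trace
      = ∑ i, ((hM.eigenvalues i * ∑ k, s k * Complex.normSq (B k i) : ℝ) : ℂ) := by
    rw [Matrix.trace]
    refine Finset.sum_congr rfl fun i _ => ?_
    rw [Matrix.diag_apply, hDl, Matrix.diagonal_mul, h3]
    push_cast
    ring
  rw [h1, h2, Complex.re_sum]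
  refine Finset.sum_congr rfl fun i _ => ?_
  rw [Complex.ofReal_re, Finset.mul_sum]
  refine Finset.sum_congr rfl fun k _ => ?_
  ring

lemma abs_trace_le {M : Matrix n n ℂ} (hM : M.IsHermitian) {V : Matrix n n ℂ}
    (hVl : Vᴴ * V = 1) (hVr : V * Vᴴ = 1) {s : n → ℝ} (hs : ∀ k, |s k| ≤ 1) :
    |((M * (V * Matrix.diagonal (fun k => (s k : ℂ)) * Vᴴ)).trace).re| ≤ tn M := by
  rw [trace_formula hM V s, tn_herm hM]
  set U : Matrix n n ℂ := (hM.eigenvectorUnitary : Matrix n n ℂ) with hUdef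
  have hUl : Uᴴ * U = 1 := by
    simpa [Matrix.star_eq_conjTranspose] using Unitary.coe_star_mul_self hM.eigenvectorUnitary
  have hB : (Vᴴ * U)ᴴ * (Vᴴ * U) = 1 := by
    rw [Matrix.conjTranspose_mul, Matrix.conjTranspose_conjTranspose]
    calc Uᴴ * V * (Vᴴ * U) = Uᴴ * (V * Vᴴ) * U := by simp only [Matrix.mul_assoc]
    _ = 1 := by rw [hVr, Matrix.mul_one, hUl]
  calc |∑ i, ∑ k, hM.eigenvalues i * s k * Complex.normSq ((Vᴴ * U) k i)|
      ≤ ∑ i, |∑ k, hM.eigenvalues i * s k * Complex.normSq ((Vᴴ * U) k i)| :=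
        Finset.abs_sum_le_sum_abs _ _
    _ ≤ ∑ i, |hM.eigenvalues i| := by
        refine Finset.sum_le_sum fun i _ => ?_
        calc |∑ k, hM.eigenvalues i * s k * Complex.normSq ((Vᴴ * U) k i)|
            ≤ ∑ k, |hM.eigenvalues i * s k * Complex.normSq ((Vᴴ * U) k i)| :=
              Finset.abs_sum_le_sum_abs _ _
          _ ≤ ∑ k, |hM.eigenvalues i| * Complex.normSq ((Vᴴ * U) k i) := by
              refine Finset.sum_le_sum fun k _ => ?_
              rw [abs_mul, abs_mul]
              rw [abs_of_nonneg (Complex.normSq_nonneg _)]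
              have h1 : |hM.eigenvalues i| * |s k| ≤ |hM.eigenvalues i| * 1 :=
                mul_le_mul_of_nonneg_left (hs k) (abs_nonneg _)
              nlinarith [Complex.normSq_nonneg ((Vᴴ * U) k i), abs_nonneg (hM.eigenvalues i)]
          _ = |hM.eigenvalues i| := by
              rw [← Finset.mul_sum, col_norm hB i, mul_one]

lemma exists_sign {M : Matrix n n ℂ} (hM : M.IsHermitian) :
    ∃ (V : Matrix n n ℂ) (s : n → ℝ), Vᴴ * V = 1 ∧ V * Vᴴ = 1 ∧ (∀ k, |s k| ≤ 1) ∧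
      tn M = ((M * (V * Matrix.diagonal (fun k => (s k : ℂ)) * Vᴴ)).trace).re := by
  set U : Matrix n n ℂ := (hM.eigenvectorUnitary : Matrix n n ℂ) with hUdef
  have hUl : Uᴴ * U = 1 := by
    simpa [Matrix.star_eq_conjTranspose] using Unitary.coe_star_mul_self hM.eigenvectorUnitary
  have hUr : U * Uᴴ = 1 := by
    simpa [Matrix.star_eq_conjTranspose] using Unitary.coe_mul_star_self hM.eigenvectorUnitary
  refine ⟨U, fun i => if 0 ≤ hM.eigenvalues i then 1 else -1, hUl, hUr, ?_, ?_⟩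
  · intro k; dsimp only; split <;> simp
  · rw [trace_formula hM U _, tn_herm hM]
    refine Finset.sum_congr rfl fun i _ => ?_
    rw [Finset.sum_eq_single i]
    · rw [hUl]
      simp only [Matrix.one_apply_eq, Complex.normSq_one, mul_one]
      split <;> rename_i hpos
      · rw [abs_of_nonneg hpos, mul_one]
      · rw [abs_of_neg (lt_of_not_ge hpos)]; ring
    · intro b _ hb
      rw [hUl, Matrix.one_apply_ne hb]
      simp
    · intro hi; exact absurd (Finset.mem_univ i) hi

lemma trace_re_eq {M : Matrix n n ℂ} (hM : M.IsHermitian) :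
    M.trace.re = ∑ i, hM.eigenvalues i := by
  have h := trace_formula hM 1 (fun _ => 1)
  set U : Matrix n n ℂ := (hM.eigenvectorUnitary : Matrix n n ℂ) with hUdef
  have hUl : Uᴴ * U = 1 := by
    simpa [Matrix.star_eq_conjTranspose] using Unitary.coe_star_mul_self hM.eigenvectorUnitary
  have hB : (1 : Matrix n n ℂ)ᴴ * U = U := by
    rw [Matrix.conjTranspose_one, Matrix.one_mul]
  simp only [Complex.ofReal_one, Matrix.diagonal_one, Matrix.mul_one, Matrix.one_mul,
    Matrix.conjTranspose_one, mul_one, one_mul, hB] at h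
  rw [h]
  refine Finset.sum_congr rfl fun i _ => ?_
  rw [← Finset.mul_sum, col_norm hUl i, mul_one]

lemma tn_psd {M : Matrix n n ℂ} (hM : M.PosSemidef) : tn M = M.trace.re := by
  rw [tn_herm hM.1, trace_re_eq hM.1]
  exact Finset.sum_congr rfl fun i _ => abs_of_nonneg (hM.eigenvalues_nonneg i)

lemma tn_add_le {M N : Matrix n n ℂ} (hM : M.IsHermitian) (hN : N.IsHermitian) :
    tn (M + N) ≤ tn M + tn N := by
  obtain ⟨V, s, hVl, hVr, hs, heq⟩ := exists_sign (hM.add hN)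
  rw [heq, Matrix.add_mul, Matrix.trace_add, Complex.add_re]
  calc ((M * (V * Matrix.diagonal (fun k => (s k : ℂ)) * Vᴴ)).trace).re
        + ((N * (V * Matrix.diagonal (fun k => (s k : ℂ)) * Vᴴ)).trace).re
      ≤ |((M * (V * Matrix.diagonal (fun k => (s k : ℂ)) * Vᴴ)).trace).re|
        + |((N * (V * Matrix.diagonal (fun k => (s k : ℂ)) * Vᴴ)).trace).re| :=
        add_le_add (le_abs_self _) (le_abs_self _)
    _ ≤ tn M + tn N := add_le_add (abs_trace_le hM hVl hVr hs) (abs_trace_le hN hVl hVr hs)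

lemma tn_zero : tn (0 : Matrix n n ℂ) = 0 := by
  obtain ⟨V, s, hVl, hVr, hs, heq⟩ := exists_sign (Matrix.isHermitian_zero (α := ℂ) (n := n))
  rw [heq, Matrix.zero_mul, Matrix.trace_zero, Complex.zero_re]

lemma herm_smul {M : Matrix n n ℂ} (hM : M.IsHermitian) (c : ℝ) :
    ((c : ℂ) • M).IsHermitian := by
  unfold Matrix.IsHermitian
  rw [Matrix.conjTranspose_smul, hM.eq, Complex.star_def, Complex.conj_ofReal]

lemma tn_smul_le {M : Matrix n n ℂ} (hM : M.IsHermitian) (c : ℝ) :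
    tn ((c : ℂ) • M) ≤ |c| * tn M := by
  obtain ⟨V, s, hVl, hVr, hs, heq⟩ := exists_sign (herm_smul hM c)
  rw [heq, Matrix.smul_mul, Matrix.trace_smul, smul_eq_mul, Complex.re_ofReal_mul]
  calc c * ((M * (V * Matrix.diagonal (fun k => (s k : ℂ)) * Vᴴ)).trace).re
      ≤ |c * ((M * (V * Matrix.diagonal (fun k => (s k : ℂ)) * Vᴴ)).trace).re| := le_abs_self _
    _ = |c| * |((M * (V * Matrix.diagonal (fun k => (s k : ℂ)) * Vᴴ)).trace).re| := abs_mul _ _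
    _ ≤ |c| * tn M := mul_le_mul_of_nonneg_left (abs_trace_le hM hVl hVr hs) (abs_nonneg c)

lemma herm_sum {ι : Type*} (t : Finset ι) (M : ι → Matrix n n ℂ)
    (h : ∀ i ∈ t, (M i).IsHermitian) : (∑ i ∈ t, M i).IsHermitian := by
  unfold Matrix.IsHermitian
  rw [Matrix.conjTranspose_sum]
  exact Finset.sum_congr rfl fun i hi => (h i hi).eq

lemma tn_sum_le {ι : Type*} (t : Finset ι) (M : ι → Matrix n n ℂ)
    (hM : ∀ i ∈ t, (M i).IsHermitian) :
    tn (∑ i ∈ t, M i) ≤ ∑ i ∈ t, tn (M i) := by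
  induction t using Finset.cons_induction with
  | empty => simp [tn_zero]
  | cons a t ha ih =>
    rw [Finset.sum_cons, Finset.sum_cons]
    have hsum : (∑ i ∈ t, M i).IsHermitian :=
      herm_sum t M (fun i hi => hM i (Finset.mem_cons_of_mem hi))
    calc tn (M a + ∑ i ∈ t, M i) ≤ tn (M a) + tn (∑ i ∈ t, M i) :=
          tn_add_le (hM a (Finset.mem_cons_self a t)) hsum
      _ ≤ tn (M a) + ∑ i ∈ t, tn (M i) := by
          have := ih (fun i hi => hM i (Finset.mem_cons_of_mem hi))
          linarith

lemma diag_test {M : Matrix n n ℂ} (hM : M.IsHermitian) {s : n → ℝ} (hs : ∀ k, |s k| ≤ 1) :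
    ∑ k, s k * (M k k).re ≤ tn M := by
  have hVl : (1 : Matrix n n ℂ)ᴴ * 1 = 1 := by simp
  have hVr : (1 : Matrix n n ℂ) * 1ᴴ = 1 := by simp
  have h := abs_trace_le hM hVl hVr hs
  simp only [Matrix.one_mul, Matrix.conjTranspose_one, Matrix.mul_one] at h
  refine le_trans ?_ (le_trans (le_abs_self _) h)
  rw [Matrix.trace, Complex.re_sum]
  refine le_of_eq (Finset.sum_congr rfl fun k _ => ?_)
  rw [Matrix.diag_apply, Matrix.mul_diagonal]
  rw [show (M k k * (s k : ℂ)).re = s k * (M k k).re from by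
    rw [mul_comm]; exact Complex.re_ofReal_mul _ _]

lemma kron_conjT {m p : Type*} (A : Matrix m m ℂ) (B : Matrix p p ℂ) :
    (A ⊗ₖ B)ᴴ = Aᴴ ⊗ₖ Bᴴ := by
  ext ⟨a, b⟩ ⟨c, e⟩
  simp [Matrix.conjTranspose_apply, Matrix.kroneckerMap_apply, star_mul']

lemma std_herm {𝒯 : Type*} [DecidableEq 𝒯] (t : 𝒯) :
    (Matrix.single t t (1 : ℂ)).IsHermitian := by
  unfold Matrix.IsHermitian
  ext i j
  by_cases h1 : t = i <;> by_cases h2 : t = j <;>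
    simp [Matrix.conjTranspose_apply, Matrix.single, Matrix.of_apply, h1, h2]

lemma trace_std {𝒯 : Type*} [Fintype 𝒯] [DecidableEq 𝒯] (t : 𝒯) :
    (Matrix.single t t (1 : ℂ)).trace = 1 := by
  simp [Matrix.trace, Matrix.diag, Matrix.single]

lemma kron_std_herm {𝒯 : Type*} [DecidableEq 𝒯] {p : Type*} (t : 𝒯)
    {B : Matrix p p ℂ} (hB : B.IsHermitian) :
    (Matrix.single t t (1 : ℂ) ⊗ₖ B).IsHermitian := by
  unfold Matrix.IsHermitian
  rw [kron_conjT, (std_herm t).eq, hB.eq]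

lemma kron_std_psd {𝒯 : Type*} [Fintype 𝒯] [DecidableEq 𝒯] {p : Type*} [Fintype p]
    [DecidableEq p] (t : 𝒯) {B : Matrix p p ℂ} (hB : B.PosSemidef) :
    (Matrix.single t t (1 : ℂ) ⊗ₖ B).PosSemidef := by
  obtain ⟨L, hL⟩ : ∃ L : Matrix p p ℂ, B = Lᴴ * L := by
    open scoped MatrixOrder in exact CStarAlgebra.nonneg_iff_eq_star_mul_self.mp hB.nonneg
  have key : (Matrix.single t t (1 : ℂ) ⊗ₖ B)
      = (Matrix.single t t (1 : ℂ) ⊗ₖ L)ᴴ * (Matrix.single t t (1 : ℂ) ⊗ₖ L) := by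
    conv_rhs => rw [kron_conjT, ← Matrix.mul_kronecker_mul, (std_herm t).eq,
      Matrix.single_mul_single_same, one_mul]
    rw [hL]
  rw [key]
  exact Matrix.posSemidef_conjTranspose_mul_self _

lemma kron_sum_right {𝒯 : Type*} {p : Type*} {ι : Type*} (s : Finset ι)
    (A : Matrix 𝒯 𝒯 ℂ) (B : ι → Matrix p p ℂ) :
    A ⊗ₖ (∑ i ∈ s, B i) = ∑ i ∈ s, A ⊗ₖ B i := by
  ext ⟨a, b⟩ ⟨c, e⟩
  simp [Matrix.kroneckerMap_apply, Matrix.sum_apply, Finset.mul_sum]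

end Stmt5Aux

namespace Stmt5Aux

lemma cq_apply {𝒯 : Type*} [Fintype 𝒯] [DecidableEq 𝒯] {d : ℕ} (P : 𝒯 → ℝ)
    (ρ : 𝒯 → Matrix (Fin d) (Fin d) ℂ) (t : 𝒯) (k k' : Fin d) :
    cqState P ρ (t, k) (t, k') = (P t : ℂ) * ρ t k k' := by
  unfold cqState
  rw [Matrix.sum_apply]
  rw [Finset.sum_eq_single t]
  · simp [Matrix.smul_apply, Matrix.kroneckerMap_apply, Matrix.single_apply_same]
  · intro b _ hb
    have h0 : Matrix.single b b (1 : ℂ) t t = 0 :=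
      Matrix.single_apply_of_ne _ _ _ _ _ (by tauto)
    simp [Matrix.smul_apply, Matrix.kroneckerMap_apply, h0]
  · intro ht; exact absurd (Finset.mem_univ t) ht

lemma cq_herm {𝒯 : Type*} [Fintype 𝒯] [DecidableEq 𝒯] {d : ℕ} (P : 𝒯 → ℝ)
    (ρ : 𝒯 → Matrix (Fin d) (Fin d) ℂ) (h : ∀ t, (ρ t).IsHermitian) :
    (cqState P ρ).IsHermitian :=
  herm_sum _ _ fun t _ => herm_smul (kron_std_herm t (h t)) (P t)

end Stmt5Aux

open Stmt5Aux

/-- If ρ_{XZE} is ε-close to the state (I/|𝒳|) ⊗ ρ_{ZE} (uniform and independent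
X), then it is 4ε-close to the Markov state ρ_{X↔Z↔E}. -/
theorem stmt5 {𝒳 𝒵 : Type*} [Fintype 𝒳] [DecidableEq 𝒳] [Nonempty 𝒳]
    [Fintype 𝒵] [DecidableEq 𝒵] {d : ℕ} (hd : 1 ≤ d)
    (P : 𝒳 × 𝒵 → ℝ) (hP : IsPMF P)
    (ρ : 𝒳 × 𝒵 → Matrix (Fin d) (Fin d) ℂ) (hρ : ∀ t, IsDensity (ρ t))
    (ε : ℝ) (hε : 0 ≤ ε)
    -- marginal
    (PZ : 𝒵 → ℝ) (hPZ : ∀ z, PZ z = ∑ x, P (x, z))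
    -- conditional states τ^z
    (τ : 𝒵 → Matrix (Fin d) (Fin d) ℂ)
    (hτ : ∀ z, τ z =
      if 0 < PZ z then ((PZ z : ℂ))⁻¹ • ∑ x, (P (x, z) : ℂ) • ρ (x, z) else 0)
    -- hypothesis: ρ_{XZE} is ε-close to (I/|𝒳|) ⊗ ρ_{ZE}
    (h : traceDist (cqState P ρ)
        (cqState (fun t => (1 / (Fintype.card 𝒳 : ℝ)) * PZ t.2) (fun t => τ t.2)) ≤ ε) :
    -- conclusion: ρ_{XZE} is 4ε-close to ρ_{X↔Z↔E}
    traceDist (cqState P ρ) (cqState P (fun t => τ t.2)) ≤ 4 * ε := by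
  classical
  obtain ⟨hPnn, hPsum⟩ := hP
  set Pu : 𝒳 × 𝒵 → ℝ := fun t => (1 / (Fintype.card 𝒳 : ℝ)) * PZ t.2 with hPu
  have hPZnn : ∀ z, 0 ≤ PZ z := fun z =>
    (hPZ z) ▸ Finset.sum_nonneg fun x _ => hPnn (x, z)
  have hPZzero : ∀ z, ¬ 0 < PZ z → PZ z = 0 := fun z hz =>
    le_antisymm (not_lt.mp hz) (hPZnn z)
  have hPzero : ∀ z, ¬ 0 < PZ z → ∀ x, P (x, z) = 0 := by
    intro z hz x
    have h0 : (0 : ℝ) = ∑ x, P (x, z) := by rw [← hPZ z, hPZzero z hz]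
    exact (Finset.sum_eq_zero_iff_of_nonneg (fun x _ => hPnn (x, z))).mp h0.symm x
      (Finset.mem_univ x)
  have hρh : ∀ t, (ρ t).IsHermitian := fun t => (hρ t).1.1
  have hτh : ∀ z, (τ z).IsHermitian := by
    intro z
    rw [hτ z]
    split
    · rw [← Complex.ofReal_inv]
      exact herm_smul (herm_sum _ _ fun x _ => herm_smul (hρh (x, z)) (P (x, z))) _
    · exact Matrix.isHermitian_zero
  have hτtr : ∀ z, 0 < PZ z → (τ z).trace = 1 := by
    intro z h0
    rw [hτ z, if_pos h0, Matrix.trace_smul, smul_eq_mul, Matrix.trace_sum]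
    have hsum : ∑ x, ((P (x, z) : ℂ) • ρ (x, z)).trace = (PZ z : ℂ) := by
      rw [Finset.sum_congr rfl (fun x _ => by
        rw [Matrix.trace_smul, smul_eq_mul, (hρ (x, z)).2, mul_one])]
      rw [hPZ z]
      push_cast
      ring
    rw [hsum, inv_mul_cancel₀ (Complex.ofReal_ne_zero.mpr (ne_of_gt h0))]
  set A := cqState P ρ with hAdef
  set B := cqState Pu (fun t => τ t.2) with hBdef
  set C := cqState P (fun t => τ t.2) with hCdef
  have hA : A.IsHermitian := cq_herm _ _ hρh
  have hB : B.IsHermitian := cq_herm _ _ fun t => hτh t.2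
  have hC : C.IsHermitian := cq_herm _ _ fun t => hτh t.2
  have hABh : (A - B).IsHermitian := hA.sub hB
  have hBCh : (B - C).IsHermitian := hB.sub hC
  set S1 : ℝ := ∑ t : 𝒳 × 𝒵, |P t - Pu t| with hS1
  have hblocksum : ∀ t : 𝒳 × 𝒵, ∑ k, ((A - B) (t, k) (t, k))
      = (P t : ℂ) * (ρ t).trace - (Pu t : ℂ) * (τ t.2).trace := by
    intro t
    rw [Finset.sum_congr rfl (fun k _ => by
      rw [Matrix.sub_apply, hAdef, hBdef, cq_apply, cq_apply])]
    rw [Finset.sum_sub_distrib, ← Finset.mul_sum, ← Finset.mul_sum]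
    rfl
  have hblockre : ∀ t : 𝒳 × 𝒵, ∑ k, (((A - B) (t, k) (t, k))).re = P t - Pu t := by
    intro t
    rw [← Complex.re_sum, hblocksum t]
    by_cases h0 : 0 < PZ t.2
    · rw [hτtr _ h0, (hρ t).2, mul_one, mul_one, ← Complex.ofReal_sub, Complex.ofReal_re]
    · have hP0 : P t = 0 := by
        have := hPzero t.2 h0 t.1
        simpa using this
      have hPu0 : Pu t = 0 := by
        rw [hPu]
        simp [hPZzero t.2 h0]
      have hτ0 : τ t.2 = 0 := by rw [hτ t.2, if_neg h0]
      rw [hP0, hPu0, hτ0, Matrix.trace_zero]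
      simp
  have hstep1 : S1 ≤ tn (A - B) := by
    have hd1 := diag_test hABh
      (s := fun p : (𝒳 × 𝒵) × Fin d => if 0 ≤ P p.1 - Pu p.1 then (1 : ℝ) else -1)
      (fun p => by split <;> norm_num)
    refine le_trans (le_of_eq ?_) hd1
    rw [hS1]
    conv_rhs => rw [Fintype.sum_prod_type]
    refine Finset.sum_congr rfl fun t _ => ?_
    have hinner : ∑ k, (if 0 ≤ P t - Pu t then (1 : ℝ) else -1) * (((A - B) (t, k) (t, k))).re
        = (if 0 ≤ P t - Pu t then (1 : ℝ) else -1) * (P t - Pu t) := by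
      rw [← Finset.mul_sum, hblockre t]
    rw [show (∑ k, (fun p : (𝒳 × 𝒵) × Fin d =>
        if 0 ≤ P p.1 - Pu p.1 then (1 : ℝ) else -1) (t, k) * (((A - B) (t, k) (t, k))).re)
        = (if 0 ≤ P t - Pu t then (1 : ℝ) else -1) * (P t - Pu t) from hinner]
    split <;> rename_i hsg
    · rw [abs_of_nonneg hsg, one_mul]
    · rw [abs_of_neg (lt_of_not_ge hsg)]; ring
  have hK1 : ∀ t u : 𝒳 × 𝒵, tn (Matrix.single t t (1 : ℂ) ⊗ₖ ρ u) = 1 := by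
    intro t u
    rw [tn_psd (kron_std_psd t (hρ u).1), Matrix.trace_kronecker, trace_std, one_mul,
      (hρ u).2, Complex.one_re]
  have hKτ : ∀ t : 𝒳 × 𝒵, tn (Matrix.single t t (1 : ℂ) ⊗ₖ τ t.2) ≤ 1 := by
    intro t
    by_cases h0 : 0 < PZ t.2
    · have hdecomp : Matrix.single t t (1 : ℂ) ⊗ₖ τ t.2
          = ∑ x, (((PZ t.2)⁻¹ * P (x, t.2) : ℝ) : ℂ) •
              (Matrix.single t t (1 : ℂ) ⊗ₖ ρ (x, t.2)) := by
        rw [hτ t.2, if_pos h0, Finset.smul_sum]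
        rw [show (∑ x, ((PZ t.2 : ℂ))⁻¹ • ((P (x, t.2) : ℂ) • ρ (x, t.2)))
            = ∑ x, (((PZ t.2)⁻¹ * P (x, t.2) : ℝ) : ℂ) • ρ (x, t.2) from
          Finset.sum_congr rfl fun x _ => by rw [smul_smul]; norm_cast]
        rw [kron_sum_right]
        exact Finset.sum_congr rfl fun x _ => by rw [Matrix.kronecker_smul]
      rw [hdecomp]
      calc tn (∑ x, (((PZ t.2)⁻¹ * P (x, t.2) : ℝ) : ℂ) •
              (Matrix.single t t (1 : ℂ) ⊗ₖ ρ (x, t.2)))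
          ≤ ∑ x, tn ((((PZ t.2)⁻¹ * P (x, t.2) : ℝ) : ℂ) •
              (Matrix.single t t (1 : ℂ) ⊗ₖ ρ (x, t.2))) :=
            tn_sum_le _ _ fun x _ => herm_smul (kron_std_herm t (hρh (x, t.2))) _
        _ ≤ ∑ x, |(PZ t.2)⁻¹ * P (x, t.2)| *
              tn (Matrix.single t t (1 : ℂ) ⊗ₖ ρ (x, t.2)) :=
            Finset.sum_le_sum fun x _ =>
              tn_smul_le (kron_std_herm t (hρh (x, t.2))) _
        _ = ∑ x, (PZ t.2)⁻¹ * P (x, t.2) := by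
            refine Finset.sum_congr rfl fun x _ => ?_
            rw [hK1 t (x, t.2), mul_one,
              abs_of_nonneg (mul_nonneg (inv_nonneg.mpr (hPZnn t.2)) (hPnn (x, t.2)))]
        _ = 1 := by
            rw [← Finset.mul_sum, ← hPZ t.2, inv_mul_cancel₀ (ne_of_gt h0)]
    · have hτ0 : τ t.2 = 0 := by rw [hτ t.2, if_neg h0]
      rw [hτ0]
      have hz : Matrix.single t t (1 : ℂ) ⊗ₖ (0 : Matrix (Fin d) (Fin d) ℂ) = 0 := by
        ext ⟨a, b⟩ ⟨c, e⟩
        simp [Matrix.kroneckerMap_apply]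
      rw [hz, tn_zero]
      norm_num
  have hBC : B - C = ∑ t, ((Pu t - P t : ℝ) : ℂ) • (Matrix.single t t (1 : ℂ) ⊗ₖ τ t.2) := by
    rw [hBdef, hCdef]
    unfold cqState
    rw [← Finset.sum_sub_distrib]
    refine Finset.sum_congr rfl fun t _ => ?_
    rw [← sub_smul]
    norm_cast
  have hstep2 : tn (B - C) ≤ S1 := by
    rw [hBC]
    calc tn (∑ t, ((Pu t - P t : ℝ) : ℂ) • (Matrix.single t t (1 : ℂ) ⊗ₖ τ t.2))
        ≤ ∑ t, tn (((Pu t - P t : ℝ) : ℂ) • (Matrix.single t t (1 : ℂ) ⊗ₖ τ t.2)) :=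
          tn_sum_le _ _ fun t _ => herm_smul (kron_std_herm t (hτh t.2)) _
      _ ≤ ∑ t, |Pu t - P t| * tn (Matrix.single t t (1 : ℂ) ⊗ₖ τ t.2) :=
          Finset.sum_le_sum fun t _ => tn_smul_le (kron_std_herm t (hτh t.2)) _
      _ ≤ ∑ t, |Pu t - P t| * 1 :=
          Finset.sum_le_sum fun t _ =>
            mul_le_mul_of_nonneg_left (hKτ t) (abs_nonneg _)
      _ = S1 := by
          rw [hS1]
          refine Finset.sum_congr rfl fun t _ => ?_
          rw [mul_one, abs_sub_comm]
  have h2eps : tn (A - B) ≤ 2 * ε := by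
    rw [traceDist_eq] at h
    linarith
  have hsplit : A - C = (A - B) + (B - C) := by abel
  have hfinal : tn (A - C) ≤ 4 * ε := by
    rw [hsplit]
    have := tn_add_le hABh hBCh
    linarith [hstep1, hstep2, h2eps]
  rw [traceDist_eq]
  linarith
end
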